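/- Let Z be a topological space, p : X → Z and q : Y → Z continuous maps admitting continuous sections s_X : Z → X (with p ∘ s_X = id) and s_Y : Z → Y (with q ∘ s_Y = id). Assume that for every z ∈ Z the fibers p⁻¹(z) and q⁻¹(z) are path-connected, and that Z is path-connected. Then the pullback { (x, y) ∈ X × Y : p(x) = q(y) } is path-connected. -/
import Mathlib


/-- If `p : X → Z` and `q : Y → Z` are continuous maps admitting continuous sections,
all fibers of `p` and `q` are path-connected, and `Z` is path-connected, then the
pullback `{(x,y) | p x = q y}` is path-connected. -/
theorem stmt15 {X Y Z : Type*} [TopologicalSpace X] [TopologicalSpace Y]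
    [TopologicalSpace Z]
    (p : X → Z) (q : Y → Z) (hp : Continuous p) (hq : Continuous q)
    (sX : Z → X) (sY : Z → Y) (hsX : Continuous sX) (hsY : Continuous sY)
    (hpsX : ∀ z, p (sX z) = z) (hqsY : ∀ z, q (sY z) = z)
    (hfibp : ∀ z, IsPathConnected (p ⁻¹' {z}))
    (hfibq : ∀ z, IsPathConnected (q ⁻¹' {z}))
    [PathConnectedSpace Z] :
    IsPathConnected {xy : X × Y | p xy.1 = q xy.2} := by
  set S : Set (X × Y) := {xy : X × Y | p xy.1 = q xy.2} with hS
  obtain ⟨z₀⟩ := (inferInstance : PathConnectedSpace Z).nonempty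
  have hbase : (sX z₀, sY z₀) ∈ S := by simp [hS, hpsX, hqsY]
  refine ⟨(sX z₀, sY z₀), hbase, ?_⟩
  rintro ⟨x, y⟩ hxy
  have hz : p x = q y := hxy
  set z := p x with hzdef
  -- step 1: (x, y) to (sX z, y) within the p-fiber
  have hx1 : x ∈ p ⁻¹' {z} := rfl
  have hx2 : sX z ∈ p ⁻¹' {z} := hpsX z
  obtain ⟨γ₁, hγ₁⟩ := (hfibp z).joinedIn x hx1 (sX z) hx2
  have step1 : JoinedIn S (x, y) (sX z, y) := by
    refine ⟨γ₁.prod (Path.refl y), fun t => ?_⟩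
    have : p (γ₁ t) = z := hγ₁ t
    simp [hS, Path.prod_coe, this, ← hz]
  -- step 2: (sX z, y) to (sX z, sY z) within the q-fiber
  have hy1 : y ∈ q ⁻¹' {z} := by simp [← hz]
  have hy2 : sY z ∈ q ⁻¹' {z} := hqsY z
  obtain ⟨γ₂, hγ₂⟩ := (hfibq z).joinedIn y hy1 (sY z) hy2
  have step2 : JoinedIn S (sX z, y) (sX z, sY z) := by
    refine ⟨(Path.refl (sX z)).prod γ₂, fun t => ?_⟩
    have : q (γ₂ t) = z := hγ₂ t
    simp [hS, Path.prod_coe, this, hpsX]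
  -- step 3: (sX z, sY z) to (sX z₀, sY z₀) via sections over a path in Z
  obtain γ₃ := PathConnectedSpace.somePath z z₀
  have step3 : JoinedIn S (sX z, sY z) (sX z₀, sY z₀) := by
    refine ⟨(γ₃.map hsX).prod (γ₃.map hsY), fun t => ?_⟩
    simp [hS, Path.prod_coe, hpsX, hqsY]
  have : JoinedIn S (x, y) (sX z₀, sY z₀) := (step1.trans step2).trans step3
  exact this.symm
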